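/- Let C ⊆ S^{47} be a finite T₂-avoiding spherical 11-design. Then |C| ≥ 52416000, and if |C| = 52416000 then ⟨x,y⟩ ≤ 1/2 for all distinct x,y ∈ C, C is antipodal, and C is distance invariant with distance distribution A_{-1}=1, A_{±1/2}=36848, A_{±1/3}=1678887, A_{±1/6}=12608784, A_0=23766960. -/

import Mathlib

open MeasureTheory Finset
open scoped Classical

/-- The normalized surface measure on the unit sphere of `EuclideanSpace ℝ (Fin n)`. -/
noncomputable def normSphereMeasure (n : ℕ) :
    Measure (Metric.sphere (0 : EuclideanSpace ℝ (Fin n)) 1) :=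
  ((volume : Measure (EuclideanSpace ℝ (Fin n))).toSphere Set.univ)⁻¹ •
    (volume : Measure (EuclideanSpace ℝ (Fin n))).toSphere

/-- `C` is a spherical `τ`-design: every polynomial in `n` variables of total degree at
most `τ` has average over `C` equal to its average over the sphere. -/
def IsSphericalDesign (n τ : ℕ) (C : Finset (EuclideanSpace ℝ (Fin n))) : Prop :=
  ∀ p : MvPolynomial (Fin n) ℝ, p.totalDegree ≤ τ →
    (1 / (C.card : ℝ)) * ∑ x ∈ C, MvPolynomial.eval (fun i => x i) p =
      ∫ x, MvPolynomial.eval (fun i => (x : EuclideanSpace ℝ (Fin n)) i) p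
        ∂(normSphereMeasure n)

/-- The discrete `h`-energy of a code `C`. -/
noncomputable def energy (n : ℕ) (h : ℝ → ℝ) (C : Finset (EuclideanSpace ℝ (Fin n))) : ℝ :=
  (1 / (C.card : ℝ)) *
    ∑ x ∈ C, ∑ y ∈ C, if x ≠ y then h (inner ℝ x y : ℝ) else 0

/-- The avoiding set `T₁ = (-1/3,-1/6) ∪ (1/6,1/3)`. -/
def T1 : Set ℝ := Set.Ioo (-1/3) (-1/6) ∪ Set.Ioo (1/6) (1/3)

/-- The avoiding set `T₂ = (-1/2,-1/3) ∪ (1/3,1/2)`. -/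
def T2 : Set ℝ := Set.Ioo (-1/2) (-1/3) ∪ Set.Ioo (1/3) (1/2)

/-- A code is antipodal if it is closed under negation. -/
def IsAntipodal {n : ℕ} (C : Finset (EuclideanSpace ℝ (Fin n))) : Prop :=
  ∀ x ∈ C, -x ∈ C

/-- The common energy value of the four exceptional codes. -/
noncomputable def Estar (h : ℝ → ℝ) : ℝ :=
  36848 * (h (-1/2) + h (1/2)) + 1678887 * (h (-1/3) + h (1/3)) +
    12608784 * (h (-1/6) + h (1/6)) + 23766960 * h 0 + h (-1)

/-- `C` is distance invariant with the distance distribution of the four exceptional codes. -/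
def HasExceptionalDistanceDistribution (C : Finset (EuclideanSpace ℝ (Fin 48))) : Prop :=
  ∀ x ∈ C,
    ((C.filter fun y => (inner ℝ x y : ℝ) = -1).card = 1) ∧
    ((C.filter fun y => (inner ℝ x y : ℝ) = -1/2).card = 36848) ∧
    ((C.filter fun y => (inner ℝ x y : ℝ) = 1/2).card = 36848) ∧
    ((C.filter fun y => (inner ℝ x y : ℝ) = -1/3).card = 1678887) ∧
    ((C.filter fun y => (inner ℝ x y : ℝ) = 1/3).card = 1678887) ∧
    ((C.filter fun y => (inner ℝ x y : ℝ) = -1/6).card = 12608784) ∧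
    ((C.filter fun y => (inner ℝ x y : ℝ) = 1/6).card = 12608784) ∧
    ((C.filter fun y => (inner ℝ x y : ℝ) = 0).card = 23766960) ∧
    (∀ t : ℝ, t < 1 → t ∉ ({-1, -1/2, 1/2, -1/3, 1/3, -1/6, 1/6, 0} : Set ℝ) →
      (C.filter fun y => (inner ℝ x y : ℝ) = t).card = 0)

open Metric Set Real
open scoped Pointwise

abbrev E48 := EuclideanSpace ℝ (Fin 48)





lemma toSphere_univ_ne_zero : ((volume : Measure E48).toSphere) Set.univ ≠ 0 := by
  rw [Measure.toSphere_apply_univ]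
  refine mul_ne_zero (by norm_num [finrank_euclideanSpace_fin]) ?_
  exact (measure_ball_pos volume (0:E48) one_pos).ne'

lemma toSphere_univ_ne_top : ((volume : Measure E48).toSphere) Set.univ ≠ ⊤ :=
  (measure_lt_top _ _).ne

lemma normSphere_univ : normSphereMeasure 48 Set.univ = 1 := by
  rw [normSphereMeasure, Measure.smul_apply, smul_eq_mul,
    ENNReal.inv_mul_cancel toSphere_univ_ne_zero toSphere_univ_ne_top]

instance : IsProbabilityMeasure (normSphereMeasure 48) := ⟨normSphere_univ⟩



lemma mem_sph (e : E48 ≃ₗᵢ[ℝ] E48) (ω : Metric.sphere (0:E48) 1) :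
    e ω ∈ Metric.sphere (0:E48) 1 := by
  simp only [mem_sphere_zero_iff_norm, e.norm_map]
  exact mem_sphere_zero_iff_norm.1 ω.2

noncomputable def sHomeo (e : E48 ≃ₗᵢ[ℝ] E48) :
    Metric.sphere (0:E48) 1 ≃ₜ Metric.sphere (0:E48) 1 where
  toFun ω := ⟨e ω, mem_sph e ω⟩
  invFun ω := ⟨e.symm ω, mem_sph e.symm ω⟩
  left_inv ω := by ext; simp
  right_inv ω := by ext; simp
  continuous_toFun := Continuous.subtype_mk (e.continuous.comp continuous_subtype_val) _
  continuous_invFun := Continuous.subtype_mk (e.symm.continuous.comp continuous_subtype_val) _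

lemma volume_image_symm (e : E48 ≃ₗᵢ[ℝ] E48) (B : Set E48) :
    volume (e.symm '' B) = volume B := by
  have h1 : e.symm '' B = e ⁻¹' B := by
    ext z; constructor
    · rintro ⟨b, hb, rfl⟩; simpa using hb
    · intro hz; exact ⟨e z, hz, by simp⟩
  have h2 : (volume : Measure E48).map e.toHomeomorph.toMeasurableEquiv = volume := by
    have : (⇑e.toHomeomorph.toMeasurableEquiv : E48 → E48) = ⇑e := rfl
    rw [this, e.measurePreserving.map_eq]
  rw [h1, show (⇑e ⁻¹' B) = (⇑e.toHomeomorph.toMeasurableEquiv ⁻¹' B) from rfl,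
    ← MeasurableEquiv.map_apply, h2]

lemma sHomeo_measurePreserving (e : E48 ≃ₗᵢ[ℝ] E48) :
    MeasurePreserving (sHomeo e) (volume : Measure E48).toSphere
      (volume : Measure E48).toSphere := by
  refine ⟨(sHomeo e).continuous.measurable, ?_⟩
  refine Measure.ext fun s hs => ?_
  rw [Measure.map_apply (sHomeo e).continuous.measurable hs,
    Measure.toSphere_apply' _ hs,
    Measure.toSphere_apply' _ ((sHomeo e).continuous.measurable hs)]
  congr 1
  have him : (Subtype.val '' ((sHomeo e) ⁻¹' s) : Set E48) = e.symm '' (Subtype.val '' s) := by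
    ext z; constructor
    · rintro ⟨ω, hω, rfl⟩
      exact ⟨e ω, ⟨_, hω, rfl⟩, by simp⟩
    · rintro ⟨y, ⟨ω, hω, rfl⟩, rfl⟩
      refine ⟨⟨e.symm ω, mem_sph e.symm ω⟩, ?_, rfl⟩
      show (⟨e (e.symm ω), _⟩ : Metric.sphere (0:E48) 1) ∈ s
      simpa [Subtype.ext_iff] using hω
  rw [him]
  have hsm : (Set.Ioo (0:ℝ) 1) • (e.symm '' (Subtype.val '' s)) =
      e.symm '' ((Set.Ioo (0:ℝ) 1) • (Subtype.val '' s)) := by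
    rw [← Set.image2_smul, Set.image2_image_right, ← Set.image2_smul,
      Set.image_image2]
    apply Set.image2_congr
    intro r _ z _
    exact (e.symm.map_smul r z).symm
  rw [hsm, volume_image_symm]



lemma sHomeo_measurePreserving_norm (e : E48 ≃ₗᵢ[ℝ] E48) :
    MeasurePreserving (sHomeo e) (normSphereMeasure 48) (normSphereMeasure 48) := by
  refine ⟨(sHomeo e).continuous.measurable, ?_⟩
  rw [normSphereMeasure, Measure.map_smul, (sHomeo_measurePreserving e).map_eq]

noncomputable def e0 : E48 := EuclideanSpace.single (0 : Fin 48) (1:ℝ)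

lemma norm_e0 : ‖e0‖ = 1 := by simp [e0]

lemma integral_inner_pow_eq (x : E48) (hx : ‖x‖ = 1) (k : ℕ) :
    ∫ z, ((inner ℝ x (z : E48) : ℝ))^k ∂(normSphereMeasure 48) =
      ∫ z, ((inner ℝ e0 (z : E48) : ℝ))^k ∂(normSphereMeasure 48) := by
  set K := (ℝ ∙ (e0 - x))ᗮ
  set e : E48 ≃ₗᵢ[ℝ] E48 := K.reflection
  have he0 : e e0 = x := Submodule.reflection_sub (by rw [norm_e0, hx])
  have := (sHomeo_measurePreserving_norm e).integral_comp
    (sHomeo e).measurableEmbedding (fun z => ((inner ℝ x (z : E48) : ℝ))^k)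
  rw [← this]
  congr 1
  funext z
  show ((inner ℝ x (e (z:E48)) : ℝ))^k = _
  rw [← he0, LinearIsometryEquiv.inner_map_map]

noncomputable def Rg (k : ℕ) : ℝ := ∫ x in Ioi (0:ℝ), x^k * Real.exp (-x^2)

lemma Rg_eq_Gamma (k : ℕ) : Rg k = (1/2) * Real.Gamma ((k+1)/2) := by
  rw [Rg, ← integral_rpow_mul_exp_neg_rpow (p := 2) (q := (k:ℝ)) two_pos
    (lt_of_lt_of_le (by norm_num) (Nat.cast_nonneg k))]
  refine setIntegral_congr_fun measurableSet_Ioi (fun x hx => ?_)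
  rw [Real.rpow_natCast, show ((2:ℝ)) = ((2:ℕ):ℝ) by norm_num, Real.rpow_natCast]

lemma Rg_pos (k : ℕ) : 0 < Rg k := by
  rw [Rg_eq_Gamma]
  have : (0:ℝ) < ((k:ℝ)+1)/2 := by positivity
  have := Real.Gamma_pos_of_pos this
  linarith

lemma Rg_succ_succ (k : ℕ) : Rg (k + 2) = (((k:ℝ)+1)/2) * Rg k := by
  rw [Rg_eq_Gamma, Rg_eq_Gamma]
  have h1 : ((k:ℝ)+2+1)/2 = ((k:ℝ)+1)/2 + 1 := by ring
  rw [show (((k+2:ℕ)):ℝ) = (k:ℝ)+2 by push_cast; ring, h1,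
    Real.Gamma_add_one (by positivity)]
  ring

noncomputable def Gg (k : ℕ) : ℝ := ∫ x : ℝ, x^k * Real.exp (-x^2)

lemma integrable_Gg (k : ℕ) : Integrable (fun x : ℝ => x^k * Real.exp (-x^2)) := by
  have := integrable_rpow_mul_exp_neg_mul_sq (b := 1) one_pos
    (s := (k:ℝ)) (lt_of_lt_of_le (by norm_num) (Nat.cast_nonneg k))
  refine this.congr ?_
  filter_upwards with x
  rw [Real.rpow_natCast, neg_mul, one_mul]

lemma Gg_even (k : ℕ) (hk : Even k) : Gg k = 2 * Rg k := by
  have hint := integrable_Gg k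
  have hsplit : Gg k = (∫ x in Set.Iic (0:ℝ), x^k * Real.exp (-x^2)) +
      ∫ x in Ioi (0:ℝ), x^k * Real.exp (-x^2) := by
    rw [Gg, ← intervalIntegral.integral_Iic_add_Ioi (b := (0:ℝ)) hint.integrableOn hint.integrableOn]
  have hneg : (∫ x in Set.Iic (0:ℝ), x^k * Real.exp (-x^2)) = Rg k := by
    rw [Rg, show Set.Iic (0:ℝ) = Set.Iic (-0) by norm_num, ← integral_comp_neg_Ioi]
    refine setIntegral_congr_fun measurableSet_Ioi (fun x _ => ?_)
    rw [hk.neg_pow, neg_sq]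
  rw [hsplit, hneg, Rg]; ring



lemma gauss_prod (k : ℕ) :
    ∫ x : E48, (x 0)^k * Real.exp (-‖x‖^2) = Gg k * Gg 0 ^ 47 := by
  have hmp := (EuclideanSpace.volume_preserving_symm_measurableEquiv_toLp (Fin 48)).symm
  rw [← hmp.integral_comp (MeasurableEquiv.measurableEmbedding _)
    (fun x : E48 => (x 0)^k * Real.exp (-‖x‖^2))]
  have hpt : ∀ y : Fin 48 → ℝ,
      (fun x : E48 => (x 0)^k * Real.exp (-‖x‖^2))
        ((MeasurableEquiv.toLp 2 (Fin 48 → ℝ)).symm.symm y) =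
      ∏ i : Fin 48, ((if i = 0 then (y i)^k else 1) * Real.exp (-(y i)^2)) := by
    intro y
    have hco : ∀ i, ((MeasurableEquiv.toLp 2 (Fin 48 → ℝ)).symm.symm y : E48) i = y i := by
      intro i; rfl
    have hnorm : ‖((MeasurableEquiv.toLp 2 (Fin 48 → ℝ)).symm.symm y : E48)‖^2
        = ∑ i, (y i)^2 := by
      rw [EuclideanSpace.norm_eq, Real.sq_sqrt (by positivity)]
      simp [hco, Real.norm_eq_abs, sq_abs]
    simp only [hco, hnorm, Finset.prod_mul_distrib]
    rw [Finset.prod_ite_eq' Finset.univ (0 : Fin 48) (fun i => (y i)^k)]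
    rw [← Real.exp_sum]
    simp [Finset.sum_neg_distrib]
  simp only [hpt]
  rw [MeasureTheory.integral_fintype_prod_volume_eq_prod
    (fun i t => (if i = 0 then t^k else 1) * Real.exp (-t^2))]
  have hint : ∀ i : Fin 48, (∫ t : ℝ, (if i = 0 then t^k else 1) * Real.exp (-t^2))
      = if i = 0 then Gg k else Gg 0 := by
    intro i
    by_cases h : i = 0 <;> simp [h, Gg]
  simp only [hint]
  rw [← Finset.mul_prod_erase Finset.univ _ (Finset.mem_univ (0 : Fin 48))]
  simp only [if_pos rfl]
  congr 1
  rw [Finset.prod_congr rfl (fun i hi => if_neg (Finset.mem_erase.1 hi).1),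
    Finset.prod_const, Finset.card_erase_of_mem (Finset.mem_univ _)]
  simp

lemma polar_moment (k : ℕ) :
    ∫ x : E48, (x 0)^k * Real.exp (-‖x‖^2) =
      (∫ ω : Metric.sphere (0:E48) 1, ((ω:E48) 0)^k
          ∂(volume : Measure E48).toSphere) * Rg (k + 47) := by
  have hdim : Module.finrank ℝ E48 = 48 := finrank_euclideanSpace_fin
  set f : E48 → ℝ := fun x => (x 0)^k * Real.exp (-‖x‖^2) with hf
  have h1 : ∫ x : E48, f x
      = ∫ x : ({(0:E48)}ᶜ : Set E48), f x ∂((volume : Measure E48).comap Subtype.val) := by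
    rw [integral_subtype_comap (measurableSet_singleton (0:E48)).compl f,
      MeasureTheory.restrict_compl_singleton]
  have hm := (volume : Measure E48).measurePreserving_homeomorphUnitSphereProd
  rw [hdim] at hm
  have h2 : ∫ x : ({(0:E48)}ᶜ : Set E48), f x ∂((volume : Measure E48).comap Subtype.val)
      = ∫ p : (Metric.sphere (0:E48) 1) × (Ioi (0:ℝ)),
          f ((p.2 : ℝ) • (p.1 : E48))
          ∂((volume : Measure E48).toSphere.prod (Measure.volumeIoiPow 47)) := by
    rw [← hm.integral_comp (Homeomorph.measurableEmbedding _)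
      (fun p : (Metric.sphere (0:E48) 1) × (Ioi (0:ℝ)) => f ((p.2 : ℝ) • (p.1 : E48)))]
    congr 1
    funext x
    show f x.1
      = f (((homeomorphUnitSphereProd E48) x).2.1 • (((homeomorphUnitSphereProd E48) x).1 : E48))
    rw [← homeomorphUnitSphereProd_symm_apply_coe, Homeomorph.symm_apply_apply]
  have h3 : ∀ p : (Metric.sphere (0:E48) 1) × (Ioi (0:ℝ)),
      f ((p.2 : ℝ) • (p.1 : E48)) =
        ((p.1 : E48) 0)^k * ((p.2 : ℝ)^k * Real.exp (-(p.2:ℝ)^2)) := by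
    rintro ⟨ω, r⟩
    have hω : ‖(ω : E48)‖ = 1 := mem_sphere_zero_iff_norm.1 ω.2
    have hr : (0:ℝ) < r := r.2
    have hsm : ((r:ℝ) • (ω : E48)) 0 = (r:ℝ) * (ω : E48) 0 := rfl
    have hnrm : ‖(r:ℝ) • (ω : E48)‖ = (r:ℝ) := by
      rw [norm_smul, hω, Real.norm_eq_abs, abs_of_pos hr, mul_one]
    simp only [hf, hsm, hnrm, mul_pow]
    ring
  rw [h1, h2]
  simp only [h3]
  rw [integral_prod_mul (f := fun ω : Metric.sphere (0:E48) 1 => ((ω:E48) 0)^k)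
    (g := fun r : Ioi (0:ℝ) => (r:ℝ)^k * Real.exp (-(r:ℝ)^2))]
  congr 1
  -- ∫ over volumeIoiPow 47
  simp only [Measure.volumeIoiPow, ENNReal.ofReal]
  rw [integral_withDensity_eq_integral_smul
    ((measurable_subtype_coe.pow_const _).real_toNNReal),
    integral_subtype_comap measurableSet_Ioi
      (fun a : ℝ => Real.toNNReal (a^47) • ((a)^k * Real.exp (-a^2)))]
  rw [Rg, setIntegral_congr_fun measurableSet_Ioi (g := fun x : ℝ => x^(k+47) * Real.exp (-x^2))
    (fun x hx => ?_)]
  rw [NNReal.smul_def, Real.coe_toNNReal _ (pow_nonneg (le_of_lt hx) _), smul_eq_mul]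
  ring



lemma toSphere_univ_ne_zero' : ((volume : Measure E48).toSphere) Set.univ ≠ 0 := by
  rw [Measure.toSphere_apply_univ]
  refine mul_ne_zero (by norm_num [finrank_euclideanSpace_fin]) ?_
  exact (measure_ball_pos volume (0:E48) one_pos).ne'

lemma sphere_raw (k : ℕ) :
    (∫ ω : Metric.sphere (0:E48) 1, ((ω:E48) 0)^k ∂(volume : Measure E48).toSphere)
      * Rg (k + 47) = Gg k * Gg 0 ^ 47 := by
  rw [← polar_moment, gauss_prod]

noncomputable def msph (k : ℕ) : ℝ :=
  ∫ ω : Metric.sphere (0:E48) 1, ((ω:E48) 0)^k ∂(normSphereMeasure 48)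

lemma msph_eq (k : ℕ) : msph k = (Rg 47 * Gg k) / (Gg 0 * Rg (k + 47)) := by
  have hB : ((volume : Measure E48).toSphere Set.univ).toReal * Rg 47 = Gg 0 ^ 48 := by
    have h0 := sphere_raw 0
    simp only [pow_zero] at h0
    rw [integral_const, smul_eq_mul, mul_one] at h0
    calc ((volume : Measure E48).toSphere Set.univ).toReal * Rg 47
        = Gg 0 * Gg 0 ^ 47 := by rw [← h0]; rfl
      _ = Gg 0 ^ 48 := by ring
  have hA := sphere_raw k
  have hG0 : 0 < Gg 0 := by
    rw [Gg_even 0 (Even.zero)]; linarith [Rg_pos 0]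
  have hBpos : 0 < ((volume : Measure E48).toSphere Set.univ).toReal := by
    nlinarith [Rg_pos 47, pow_pos hG0 48]
  rw [msph, normSphereMeasure, integral_smul_measure, ENNReal.toReal_inv, smul_eq_mul]
  have hR := Rg_pos (k + 47)
  have hR47 := Rg_pos 47
  have hBval : ((volume : Measure E48).toSphere Set.univ).toReal = Gg 0 ^ 48 / Rg 47 := by
    field_simp at hB ⊢; linarith
  rw [hBval]
  have hAval : (∫ ω : Metric.sphere (0:E48) 1, ((ω:E48) 0)^k
      ∂(volume : Measure E48).toSphere) = Gg k * Gg 0 ^ 47 / Rg (k + 47) := by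
    field_simp at hA ⊢; linarith
  rw [hAval]
  have h48 : Gg 0 ^ 48 = Gg 0 * Gg 0 ^ 47 := by ring
  field_simp

lemma msph_val0 : msph 0 = 1 := by
  have hG0 : 0 < Gg 0 := by rw [Gg_even 0 Even.zero]; linarith [Rg_pos 0]
  rw [msph_eq]; field_simp [ (Rg_pos 47).ne']

lemma Rg49 : Rg 49 = 24 * Rg 47 := by
  have := Rg_succ_succ 47; norm_num at this; linarith
lemma Rg51 : Rg 51 = 25 * Rg 49 := by
  have := Rg_succ_succ 49; norm_num at this; linarith
lemma Rg53 : Rg 53 = 26 * Rg 51 := by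
  have := Rg_succ_succ 51; norm_num at this; linarith
lemma Rg55 : Rg 55 = 27 * Rg 53 := by
  have := Rg_succ_succ 53; norm_num at this; linarith
lemma Rg57 : Rg 57 = 28 * Rg 55 := by
  have := Rg_succ_succ 55; norm_num at this; linarith
lemma Rg2 : Rg 2 = (1/2) * Rg 0 := by
  have := Rg_succ_succ 0; norm_num at this; linarith
lemma Rg4 : Rg 4 = (3/2) * Rg 2 := by
  have := Rg_succ_succ 2; norm_num at this; linarith
lemma Rg6 : Rg 6 = (5/2) * Rg 4 := by
  have := Rg_succ_succ 4; norm_num at this; linarith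
lemma Rg8 : Rg 8 = (7/2) * Rg 6 := by
  have := Rg_succ_succ 6; norm_num at this; linarith
lemma Rg10 : Rg 10 = (9/2) * Rg 8 := by
  have := Rg_succ_succ 8; norm_num at this; linarith

lemma msph_even_val (k : ℕ) (hk : Even k) (hk' : k ≤ 10) :
    ∀ v : ℝ, (Rg k * Rg 47 = v * (Rg 0 * Rg (k+47))) → msph k = v := by
  intro v hv
  have h1 : msph k = (Rg 47 * (2 * Rg k)) / ((2 * Rg 0) * Rg (k + 47)) := by
    rw [msph_eq, Gg_even k hk, Gg_even 0 Even.zero]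
  rw [h1]
  have h0 := Rg_pos 0
  have h47 := Rg_pos (k+47)
  field_simp
  nlinarith [hv]

lemma msph2 : msph 2 = 1/48 := by
  refine msph_even_val 2 (by norm_num) (by norm_num) _ ?_
  rw [Rg2, show (2+47) = 49 from rfl, Rg49]; ring
lemma msph4 : msph 4 = 1/800 := by
  refine msph_even_val 4 (by decide) (by norm_num) _ ?_
  rw [Rg4, Rg2, show (4+47) = 51 from rfl, Rg51, Rg49]; ring
lemma msph6 : msph 6 = 1/8320 := by
  refine msph_even_val 6 (by decide) (by norm_num) _ ?_
  rw [Rg6, Rg4, Rg2, show (6+47) = 53 from rfl, Rg53, Rg51, Rg49]; ring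
lemma msph8 : msph 8 = 7/449280 := by
  refine msph_even_val 8 (by decide) (by norm_num) _ ?_
  rw [Rg8, Rg6, Rg4, Rg2, show (8+47) = 55 from rfl, Rg55, Rg53, Rg51, Rg49]; ring
lemma msph10 : msph 10 = 7/2795520 := by
  refine msph_even_val 10 (by decide) (by norm_num) _ ?_
  rw [Rg10, Rg8, Rg6, Rg4, Rg2, show (10+47) = 57 from rfl, Rg57, Rg55, Rg53, Rg51, Rg49]; ring


lemma msph_odd (k : ℕ) (hk : Odd k) : msph k = 0 := by
  have e : E48 ≃ₗᵢ[ℝ] E48 := LinearIsometryEquiv.neg ℝ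
  have h := (sHomeo_measurePreserving_norm (LinearIsometryEquiv.neg ℝ)).integral_comp
    (sHomeo (LinearIsometryEquiv.neg ℝ)).measurableEmbedding
    (fun ω : Metric.sphere (0:E48) 1 => ((ω:E48) 0)^k)
  have hpt : ∀ ω : Metric.sphere (0:E48) 1,
      (((sHomeo (LinearIsometryEquiv.neg ℝ) ω : Metric.sphere (0:E48) 1) : E48) 0)^k
        = -(((ω:E48) 0)^k) := by
    intro ω
    have : ((sHomeo (LinearIsometryEquiv.neg ℝ) ω : Metric.sphere (0:E48) 1) : E48) 0
        = -((ω:E48) 0) := rfl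
    rw [this, hk.neg_pow]
  simp only [hpt] at h
  rw [integral_neg] at h
  have : msph k = ∫ ω : Metric.sphere (0:E48) 1, ((ω:E48) 0)^k ∂(normSphereMeasure 48) := rfl
  rw [this]
  linarith [h]

/-- The sequence of moments of the sphere `S^47`. -/
noncomputable def mval (k : ℕ) : ℝ :=
  if k = 0 then 1 else if k = 2 then 1/48 else if k = 4 then 1/800 else
    if k = 6 then 1/8320 else if k = 8 then 7/449280 else if k = 10 then 7/2795520 else 0

lemma inner_e0 (z : E48) : (inner ℝ e0 z : ℝ) = z 0 := by
  simp [e0, EuclideanSpace.inner_single_left]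

lemma moment_lemma (x : E48) (hx : ‖x‖ = 1) (k : ℕ) (hk : k ≤ 11) :
    ∫ z : Metric.sphere (0:E48) 1, ((inner ℝ x (z : E48) : ℝ))^k ∂(normSphereMeasure 48)
      = mval k := by
  rw [integral_inner_pow_eq x hx k]
  have hmsph : ∫ z : Metric.sphere (0:E48) 1, ((inner ℝ e0 (z : E48) : ℝ))^k
      ∂(normSphereMeasure 48) = msph k := by
    simp only [inner_e0]; rfl
  rw [hmsph]
  interval_cases k
  · exact msph_val0
  · exact msph_odd 1 (by decide)
  · exact msph2
  · exact msph_odd 3 (by decide)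
  · exact msph4
  · exact msph_odd 5 (by decide)
  · exact msph6
  · exact msph_odd 7 (by decide)
  · exact msph8
  · exact msph_odd 9 (by decide)
  · exact msph10
  · exact msph_odd 11 (by decide)

lemma design_card_ne_zero {C : Finset E48} (hCdesign : IsSphericalDesign 48 11 C) :
    C.card ≠ 0 := by
  intro h0
  have hdes := hCdesign 1 (by simp [MvPolynomial.totalDegree_one])
  have hC : C = ∅ := Finset.card_eq_zero.mp h0
  rw [hC] at hdes
  simp only [map_one, Finset.sum_empty, mul_zero, Finset.card_empty] at hdes
  rw [integral_const] at hdes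
  have : (normSphereMeasure 48) Set.univ = 1 := normSphere_univ
  rw [measureReal_def, this] at hdes
  norm_num at hdes

lemma design_pow_sum {C : Finset E48} (hCsphere : ∀ x ∈ C, ‖x‖ = 1)
    (hCdesign : IsSphericalDesign 48 11 C) (x : E48) (hx : x ∈ C) (k : ℕ) (hk : k ≤ 11) :
    ∑ y ∈ C, ((inner ℝ x y : ℝ))^k = (C.card : ℝ) * mval k := by
  classical
  set p : MvPolynomial (Fin 48) ℝ :=
    (∑ i, MvPolynomial.C (x i) * MvPolynomial.X i)^k with hp
  have hdeg : p.totalDegree ≤ 11 := by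
    refine le_trans (MvPolynomial.totalDegree_pow _ _) ?_
    have hlin : (∑ i, MvPolynomial.C (x i) * MvPolynomial.X i :
        MvPolynomial (Fin 48) ℝ).totalDegree ≤ 1 := by
      refine le_trans (MvPolynomial.totalDegree_finset_sum _ _) ?_
      refine Finset.sup_le fun i _ => ?_
      refine le_trans (MvPolynomial.totalDegree_mul _ _) ?_
      simp [MvPolynomial.totalDegree_C, MvPolynomial.totalDegree_X]
    calc k * (∑ i, MvPolynomial.C (x i) * MvPolynomial.X i :
          MvPolynomial (Fin 48) ℝ).totalDegree ≤ k * 1 := Nat.mul_le_mul_left k hlin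
      _ ≤ 11 := by omega
  have heval : ∀ z : E48, MvPolynomial.eval (fun i => z i) p = ((inner ℝ x z : ℝ))^k := by
    intro z
    rw [hp, map_pow]
    congr 1
    rw [map_sum]
    simp only [map_mul, MvPolynomial.eval_C, MvPolynomial.eval_X]
    rw [show (inner ℝ x z : ℝ) = ∑ i, x i * z i from by
      simp [PiLp.inner_apply, RCLike.inner_apply, conj_trivial, mul_comm]]
  have hd := hCdesign p hdeg
  have hsum : ∑ y ∈ C, MvPolynomial.eval (fun i => y i) p = ∑ y ∈ C, ((inner ℝ x y : ℝ))^k :=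
    Finset.sum_congr rfl (fun y _ => heval y)
  have hint : (fun z : Metric.sphere (0:E48) 1 =>
      MvPolynomial.eval (fun i => (z : E48) i) p) =
      fun z : Metric.sphere (0:E48) 1 => ((inner ℝ x (z : E48) : ℝ))^k :=
    funext fun z => heval (z : E48)
  rw [hsum, hint, moment_lemma x (hCsphere x hx) k hk] at hd
  have hN : (C.card : ℝ) ≠ 0 := by
    exact_mod_cast design_card_ne_zero hCdesign
  calc ∑ y ∈ C, ((inner ℝ x y : ℝ))^k
      = (C.card : ℝ) * ((1 / (C.card : ℝ)) * ∑ y ∈ C, ((inner ℝ x y : ℝ))^k) := by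
        field_simp
    _ = (C.card : ℝ) * mval k := by rw [hd]


/-- The eight possible off-diagonal inner products. -/
def IsRoot (u : ℝ) : Prop := u = -1 ∨ u = -1/2 ∨ u = 1/2 ∨ u = -1/3 ∨ u = 1/3 ∨
  u = -1/6 ∨ u = 1/6 ∨ u = 0

/-- The LP certificate polynomial. -/
noncomputable def fF (t : ℝ) : ℝ := (t+1) * (t^2-1/4) * (t^2-1/9) * t^2 * (t^2-1/36)^2

lemma fF_nonneg (t : ℝ) (h1 : -1 ≤ t) (h2 : t ∉ T2) : 0 ≤ fF t := by
  rw [T2, Set.mem_union, Set.mem_Ioo, Set.mem_Ioo] at h2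
  push_neg at h2
  obtain ⟨hA, hB⟩ := h2
  have key : 0 ≤ (t^2-1/4)*(t^2-1/9) := by
    rcases le_or_gt t 0 with h|h
    · rcases le_or_gt t (-(1/2)) with h2|h2
      · have ha : 1/4 ≤ t^2 := by
          nlinarith [mul_nonneg (by linarith : (0:ℝ) ≤ -t-1/2) (by linarith : (0:ℝ) ≤ -t+1/2)]
        exact mul_nonneg (by linarith) (by nlinarith)
      · have h3 := hA (by linarith)
        have ha : t^2 ≤ 1/9 := by
          nlinarith [mul_nonneg (by linarith : (0:ℝ) ≤ t+1/3) (by linarith : (0:ℝ) ≤ 1/3-t)]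
        have := mul_nonneg (by linarith : (0:ℝ) ≤ 1/4 - t^2) (by linarith : (0:ℝ) ≤ 1/9 - t^2)
        nlinarith
    · rcases le_or_gt (1/2) t with h2|h2
      · have ha : 1/4 ≤ t^2 := by
          nlinarith [mul_nonneg (by linarith : (0:ℝ) ≤ t-1/2) (by linarith : (0:ℝ) ≤ t+1/2)]
        exact mul_nonneg (by linarith) (by nlinarith)
      · rcases le_or_gt t (1/3) with h4|h4
        · have ha : t^2 ≤ 1/9 := by
            nlinarith [mul_nonneg (by linarith : (0:ℝ) ≤ 1/3-t) (by linarith : (0:ℝ) ≤ t+1/3)]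
          have := mul_nonneg (by linarith : (0:ℝ) ≤ 1/4 - t^2) (by linarith : (0:ℝ) ≤ 1/9 - t^2)
          nlinarith
        · exact absurd (hB h4) (not_le.mpr h2)
  have h0 : 0 ≤ t + 1 := by linarith
  have hsq : 0 ≤ (t*(t^2-1/36))^2 := sq_nonneg _
  calc (0:ℝ) ≤ ((t+1) * ((t^2-1/4)*(t^2-1/9))) * (t*(t^2-1/36))^2 :=
        mul_nonneg (mul_nonneg h0 key) hsq
    _ = fF t := by rw [fF]; ring

lemma fF_root (t : ℝ) (h : fF t = 0) : IsRoot t := by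
  rw [fF] at h
  rw [IsRoot]
  have h' : (t+1) * ((t-1/2)*(t+1/2)) * ((t-1/3)*(t+1/3)) * t^2 *
      (((t-1/6)*(t+1/6))*((t-1/6)*(t+1/6))) = 0 := by rw [← h]; ring
  rcases mul_eq_zero.mp h' with h'' | h''
  · rcases mul_eq_zero.mp h'' with h3 | h3
    · rcases mul_eq_zero.mp h3 with h4 | h4
      · rcases mul_eq_zero.mp h4 with h5 | h5
        · left; linarith
        · rcases mul_eq_zero.mp h5 with h6 | h6
          · right; right; left; linarith
          · right; left; linarith
      · rcases mul_eq_zero.mp h4 with h5 | h5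
        · right; right; right; right; left; linarith
        · right; right; right; left; linarith
    · have h4 : t = 0 := sq_eq_zero_iff.mp h3
      right; right; right; right; right; right; right; exact h4
  · rcases mul_eq_zero.mp h'' with h3 | h3 <;>
    · rcases mul_eq_zero.mp h3 with h4 | h4
      · right; right; right; right; right; right; left; linarith
      · right; right; right; right; right; left; linarith


lemma fF_expand (t : ℝ) : fF t = (1/46656)*t^2 + (1/46656)*t^3 + (-85/46656)*t^4 + (-85/46656)*t^5 + (7/144)*t^6 + (7/144)*t^7 + (-5/12)*t^8 + (-5/12)*t^9 + (1)*t^10 + (1)*t^11 := by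
  rw [fF]; ring

lemma sum_fF {C : Finset E48} (hCsphere : ∀ x ∈ C, ‖x‖ = 1)
    (hCdesign : IsSphericalDesign 48 11 C) (x : E48) (hx : x ∈ C) :
    ∑ y ∈ C, fF ((inner ℝ x y : ℝ)) = (C.card : ℝ) * (7/291133440) := by
  have hps : ∀ k : ℕ, k ≤ 11 → ∑ y ∈ C, ((inner ℝ x y : ℝ))^k = (C.card : ℝ) * mval k :=
    fun k hk => design_pow_sum hCsphere hCdesign x hx k hk
  simp only [fF_expand, Finset.sum_add_distrib, ← Finset.mul_sum]
  rw [hps 2 (by norm_num), hps 3 (by norm_num), hps 4 (by norm_num), hps 5 (by norm_num), hps 6 (by norm_num), hps 7 (by norm_num), hps 8 (by norm_num), hps 9 (by norm_num), hps 10 (by norm_num), hps 11 (by norm_num)]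
  norm_num [mval]
  try ring


noncomputable def Lagm1 (t : ℝ) : ℝ := (1/840)*t^1 + (-7/120)*t^3 + (3/5)*t^5 + (-54/35)*t^7

lemma sum_Lagm1 {C : Finset E48} (hCsphere : ∀ x ∈ C, ‖x‖ = 1)
    (hCdesign : IsSphericalDesign 48 11 C) (x : E48) (hx : x ∈ C) :
    ∑ y ∈ C, Lagm1 ((inner ℝ x y : ℝ)) = (C.card : ℝ) * (0) := by
  have hps : ∀ k : ℕ, k ≤ 11 → ∑ y ∈ C, ((inner ℝ x y : ℝ))^k = (C.card : ℝ) * mval k :=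
    fun k hk => design_pow_sum hCsphere hCdesign x hx k hk
  simp only [Lagm1, Finset.sum_add_distrib, ← Finset.mul_sum]
  rw [hps 1 (by norm_num), hps 3 (by norm_num), hps 5 (by norm_num), hps 7 (by norm_num)]
  norm_num [mval]
  try ring

lemma Lagm1_vals : Lagm1 ((-1)) = 1 ∧ ∀ u : ℝ, IsRoot u → u ≠ (-1) → Lagm1 u = 0 := by
  refine ⟨by norm_num [Lagm1], ?_⟩
  rintro u (rfl|rfl|rfl|rfl|rfl|rfl|rfl|rfl) hne <;> revert hne <;> norm_num [Lagm1]


noncomputable def Lagmh (t : ℝ) : ℝ := (-1/5)*t^1 + (1/5)*t^2 + (47/5)*t^3 + (-9)*t^4 + (-414/5)*t^5 + (324/5)*t^6 + (648/5)*t^7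

lemma sum_Lagmh {C : Finset E48} (hCsphere : ∀ x ∈ C, ‖x‖ = 1)
    (hCdesign : IsSphericalDesign 48 11 C) (x : E48) (hx : x ∈ C) :
    ∑ y ∈ C, Lagmh ((inner ℝ x y : ℝ)) = (C.card : ℝ) * (11/15600) := by
  have hps : ∀ k : ℕ, k ≤ 11 → ∑ y ∈ C, ((inner ℝ x y : ℝ))^k = (C.card : ℝ) * mval k :=
    fun k hk => design_pow_sum hCsphere hCdesign x hx k hk
  simp only [Lagmh, Finset.sum_add_distrib, ← Finset.mul_sum]
  rw [hps 1 (by norm_num), hps 2 (by norm_num), hps 3 (by norm_num), hps 4 (by norm_num), hps 5 (by norm_num), hps 6 (by norm_num), hps 7 (by norm_num)]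
  norm_num [mval]
  try ring

lemma Lagmh_vals : Lagmh ((-1/2)) = 1 ∧ ∀ u : ℝ, IsRoot u → u ≠ (-1/2) → Lagmh u = 0 := by
  refine ⟨by norm_num [Lagmh], ?_⟩
  rintro u (rfl|rfl|rfl|rfl|rfl|rfl|rfl|rfl) hne <;> revert hne <;> norm_num [Lagmh]


noncomputable def Lagph (t : ℝ) : ℝ := (1/15)*t^1 + (1/5)*t^2 + (-43/15)*t^3 + (-9)*t^4 + (78/5)*t^5 + (324/5)*t^6 + (216/5)*t^7

lemma sum_Lagph {C : Finset E48} (hCsphere : ∀ x ∈ C, ‖x‖ = 1)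
    (hCdesign : IsSphericalDesign 48 11 C) (x : E48) (hx : x ∈ C) :
    ∑ y ∈ C, Lagph ((inner ℝ x y : ℝ)) = (C.card : ℝ) * (11/15600) := by
  have hps : ∀ k : ℕ, k ≤ 11 → ∑ y ∈ C, ((inner ℝ x y : ℝ))^k = (C.card : ℝ) * mval k :=
    fun k hk => design_pow_sum hCsphere hCdesign x hx k hk
  simp only [Lagph, Finset.sum_add_distrib, ← Finset.mul_sum]
  rw [hps 1 (by norm_num), hps 2 (by norm_num), hps 3 (by norm_num), hps 4 (by norm_num), hps 5 (by norm_num), hps 6 (by norm_num), hps 7 (by norm_num)]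
  norm_num [mval]
  try ring

lemma Lagph_vals : Lagph ((1/2)) = 1 ∧ ∀ u : ℝ, IsRoot u → u ≠ (1/2) → Lagph u = 0 := by
  refine ⟨by norm_num [Lagph], ?_⟩
  rintro u (rfl|rfl|rfl|rfl|rfl|rfl|rfl|rfl) hne <;> revert hne <;> norm_num [Lagph]


noncomputable def Lagmt (t : ℝ) : ℝ := (27/20)*t^1 + (-27/10)*t^2 + (-1161/20)*t^3 + (108)*t^4 + (1782/5)*t^5 + (-1944/5)*t^6 + (-2916/5)*t^7

lemma sum_Lagmt {C : Finset E48} (hCsphere : ∀ x ∈ C, ‖x‖ = 1)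
    (hCdesign : IsSphericalDesign 48 11 C) (x : E48) (hx : x ∈ C) :
    ∑ y ∈ C, Lagmt ((inner ℝ x y : ℝ)) = (C.card : ℝ) * (333/10400) := by
  have hps : ∀ k : ℕ, k ≤ 11 → ∑ y ∈ C, ((inner ℝ x y : ℝ))^k = (C.card : ℝ) * mval k :=
    fun k hk => design_pow_sum hCsphere hCdesign x hx k hk
  simp only [Lagmt, Finset.sum_add_distrib, ← Finset.mul_sum]
  rw [hps 1 (by norm_num), hps 2 (by norm_num), hps 3 (by norm_num), hps 4 (by norm_num), hps 5 (by norm_num), hps 6 (by norm_num), hps 7 (by norm_num)]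
  norm_num [mval]
  try ring

lemma Lagmt_vals : Lagmt ((-1/3)) = 1 ∧ ∀ u : ℝ, IsRoot u → u ≠ (-1/3) → Lagmt u = 0 := by
  refine ⟨by norm_num [Lagmt], ?_⟩
  rintro u (rfl|rfl|rfl|rfl|rfl|rfl|rfl|rfl) hne <;> revert hne <;> norm_num [Lagmt]


noncomputable def Lagpt (t : ℝ) : ℝ := (-27/40)*t^1 + (-27/10)*t^2 + (999/40)*t^3 + (108)*t^4 + (-81/5)*t^5 + (-1944/5)*t^6 + (-1458/5)*t^7

lemma sum_Lagpt {C : Finset E48} (hCsphere : ∀ x ∈ C, ‖x‖ = 1)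
    (hCdesign : IsSphericalDesign 48 11 C) (x : E48) (hx : x ∈ C) :
    ∑ y ∈ C, Lagpt ((inner ℝ x y : ℝ)) = (C.card : ℝ) * (333/10400) := by
  have hps : ∀ k : ℕ, k ≤ 11 → ∑ y ∈ C, ((inner ℝ x y : ℝ))^k = (C.card : ℝ) * mval k :=
    fun k hk => design_pow_sum hCsphere hCdesign x hx k hk
  simp only [Lagpt, Finset.sum_add_distrib, ← Finset.mul_sum]
  rw [hps 1 (by norm_num), hps 2 (by norm_num), hps 3 (by norm_num), hps 4 (by norm_num), hps 5 (by norm_num), hps 6 (by norm_num), hps 7 (by norm_num)]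
  norm_num [mval]
  try ring

lemma Lagpt_vals : Lagpt ((1/3)) = 1 ∧ ∀ u : ℝ, IsRoot u → u ≠ (1/3) → Lagpt u = 0 := by
  refine ⟨by norm_num [Lagpt], ?_⟩
  rintro u (rfl|rfl|rfl|rfl|rfl|rfl|rfl|rfl) hne <;> revert hne <;> norm_num [Lagpt]


noncomputable def Lagms (t : ℝ) : ℝ := (-27/5)*t^1 + (27)*t^2 + (513/5)*t^3 + (-351)*t^4 + (-3078/5)*t^5 + (972)*t^6 + (5832/5)*t^7

lemma sum_Lagms {C : Finset E48} (hCsphere : ∀ x ∈ C, ‖x‖ = 1)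
    (hCdesign : IsSphericalDesign 48 11 C) (x : E48) (hx : x ∈ C) :
    ∑ y ∈ C, Lagms ((inner ℝ x y : ℝ)) = (C.card : ℝ) * (1251/5200) := by
  have hps : ∀ k : ℕ, k ≤ 11 → ∑ y ∈ C, ((inner ℝ x y : ℝ))^k = (C.card : ℝ) * mval k :=
    fun k hk => design_pow_sum hCsphere hCdesign x hx k hk
  simp only [Lagms, Finset.sum_add_distrib, ← Finset.mul_sum]
  rw [hps 1 (by norm_num), hps 2 (by norm_num), hps 3 (by norm_num), hps 4 (by norm_num), hps 5 (by norm_num), hps 6 (by norm_num), hps 7 (by norm_num)]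
  norm_num [mval]
  try ring

lemma Lagms_vals : Lagms ((-1/6)) = 1 ∧ ∀ u : ℝ, IsRoot u → u ≠ (-1/6) → Lagms u = 0 := by
  refine ⟨by norm_num [Lagms], ?_⟩
  rintro u (rfl|rfl|rfl|rfl|rfl|rfl|rfl|rfl) hne <;> revert hne <;> norm_num [Lagms]


noncomputable def Lagps (t : ℝ) : ℝ := (27/7)*t^1 + (27)*t^2 + (-27)*t^3 + (-351)*t^4 + (-162)*t^5 + (972)*t^6 + (5832/7)*t^7

lemma sum_Lagps {C : Finset E48} (hCsphere : ∀ x ∈ C, ‖x‖ = 1)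
    (hCdesign : IsSphericalDesign 48 11 C) (x : E48) (hx : x ∈ C) :
    ∑ y ∈ C, Lagps ((inner ℝ x y : ℝ)) = (C.card : ℝ) * (1251/5200) := by
  have hps : ∀ k : ℕ, k ≤ 11 → ∑ y ∈ C, ((inner ℝ x y : ℝ))^k = (C.card : ℝ) * mval k :=
    fun k hk => design_pow_sum hCsphere hCdesign x hx k hk
  simp only [Lagps, Finset.sum_add_distrib, ← Finset.mul_sum]
  rw [hps 1 (by norm_num), hps 2 (by norm_num), hps 3 (by norm_num), hps 4 (by norm_num), hps 5 (by norm_num), hps 6 (by norm_num), hps 7 (by norm_num)]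
  norm_num [mval]
  try ring

lemma Lagps_vals : Lagps ((1/6)) = 1 ∧ ∀ u : ℝ, IsRoot u → u ≠ (1/6) → Lagps u = 0 := by
  refine ⟨by norm_num [Lagps], ?_⟩
  rintro u (rfl|rfl|rfl|rfl|rfl|rfl|rfl|rfl) hne <;> revert hne <;> norm_num [Lagps]


noncomputable def Lagze (t : ℝ) : ℝ := (1)*t^0 + (1)*t^1 + (-49)*t^2 + (-49)*t^3 + (504)*t^4 + (504)*t^5 + (-1296)*t^6 + (-1296)*t^7

lemma sum_Lagze {C : Finset E48} (hCsphere : ∀ x ∈ C, ‖x‖ = 1)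
    (hCdesign : IsSphericalDesign 48 11 C) (x : E48) (hx : x ∈ C) :
    ∑ y ∈ C, Lagze ((inner ℝ x y : ℝ)) = (C.card : ℝ) * (7073/15600) := by
  have hps : ∀ k : ℕ, k ≤ 11 → ∑ y ∈ C, ((inner ℝ x y : ℝ))^k = (C.card : ℝ) * mval k :=
    fun k hk => design_pow_sum hCsphere hCdesign x hx k hk
  simp only [Lagze, Finset.sum_add_distrib, ← Finset.mul_sum]
  rw [hps 0 (by norm_num), hps 1 (by norm_num), hps 2 (by norm_num), hps 3 (by norm_num), hps 4 (by norm_num), hps 5 (by norm_num), hps 6 (by norm_num), hps 7 (by norm_num)]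
  norm_num [mval]
  try ring

lemma Lagze_vals : Lagze ((0)) = 1 ∧ ∀ u : ℝ, IsRoot u → u ≠ (0) → Lagze u = 0 := by
  refine ⟨by norm_num [Lagze], ?_⟩
  rintro u (rfl|rfl|rfl|rfl|rfl|rfl|rfl|rfl) hne <;> revert hne <;> norm_num [Lagze]

lemma inner_eq_neg_one_imp {x y : E48} (hx : ‖x‖ = 1) (hy : ‖y‖ = 1)
    (h : (inner ℝ x y : ℝ) = -1) : y = -x := by
  have hn : ‖x + y‖^2 = ‖x‖^2 + 2 * (inner ℝ x y : ℝ) + ‖y‖^2 := norm_add_sq_real x y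
  rw [hx, hy, h] at hn
  norm_num at hn
  exact eq_neg_of_add_eq_zero_right hn

lemma count_core {C : Finset E48} {x : E48} (hx : x ∈ C)
    (hdiag : (inner ℝ x x : ℝ) = 1)
    (hroot : ∀ y ∈ C, y ≠ x → IsRoot ((inner ℝ x y : ℝ)))
    (L : ℝ → ℝ) (s : ℝ) (hs1 : s ≠ 1)
    (hLs : L s = 1) (hLz : ∀ u : ℝ, IsRoot u → u ≠ s → L u = 0) :
    ∑ y ∈ C, L ((inner ℝ x y : ℝ))
      = L 1 + ((C.filter fun y => (inner ℝ x y : ℝ) = s).card : ℝ) := by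
  classical
  rw [← Finset.add_sum_erase C _ hx, hdiag]
  congr 1
  have hcongr : ∀ y ∈ C.erase x,
      L ((inner ℝ x y : ℝ)) = if (inner ℝ x y : ℝ) = s then (1:ℝ) else 0 := by
    intro y hy
    obtain ⟨hyx, hyC⟩ := Finset.mem_erase.mp hy
    by_cases h : (inner ℝ x y : ℝ) = s
    · rw [if_pos h, h, hLs]
    · rw [if_neg h, hLz _ (hroot y hyC hyx) h]
  rw [Finset.sum_congr rfl hcongr, Finset.sum_boole]
  have heq : Finset.filter (fun y => (inner ℝ x y : ℝ) = s) (C.erase x)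
      = Finset.filter (fun y => (inner ℝ x y : ℝ) = s) C := by
    rw [Finset.filter_erase]
    refine Finset.erase_eq_of_notMem ?_
    intro hmem
    exact hs1 (by rw [← (Finset.mem_filter.mp hmem).2, hdiag])
  rw [heq]
theorem min_cardinality_T2_designs (C : Finset (EuclideanSpace ℝ (Fin 48)))
    (hCsphere : ∀ x ∈ C, ‖x‖ = 1)
    (hCavoid : ∀ x ∈ C, ∀ y ∈ C, x ≠ y → (inner ℝ x y : ℝ) ∉ T2)
    (hCdesign : IsSphericalDesign 48 11 C) :
    52416000 ≤ C.card ∧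
      (C.card = 52416000 →
        (∀ x ∈ C, ∀ y ∈ C, x ≠ y → (inner ℝ x y : ℝ) ≤ 1/2) ∧
        IsAntipodal C ∧ HasExceptionalDistanceDistribution C) := by
  classical
  have hN0 : C.card ≠ 0 := design_card_ne_zero hCdesign
  obtain ⟨x₀, hx₀⟩ := Finset.card_pos.mp (Nat.pos_of_ne_zero hN0)
  have hNpos : (0:ℝ) < (C.card : ℝ) := by exact_mod_cast Nat.pos_of_ne_zero hN0
  have hdiag : ∀ x ∈ C, (inner ℝ x x : ℝ) = 1 := fun x hx => by
    rw [real_inner_self_eq_norm_mul_norm, hCsphere x hx, mul_one]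
  have hlow : ∀ x ∈ C, ∀ y ∈ C, -1 ≤ (inner ℝ x y : ℝ) := by
    intro x hx y hy
    have h := abs_real_inner_le_norm x y
    rw [hCsphere x hx, hCsphere y hy, mul_one] at h
    linarith [(abs_le.mp h).1]
  have hF1 : fF 1 = 1225/972 := by norm_num [fF]
  have hsplit : ∀ x ∈ C, ∑ y ∈ C.erase x, fF ((inner ℝ x y : ℝ))
      = (C.card : ℝ) * (7/291133440) - 1225/972 := by
    intro x hx
    have h := sum_fF hCsphere hCdesign x hx
    rw [← Finset.add_sum_erase C _ hx, hdiag x hx, hF1] at h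
    linarith
  have hnonneg : ∀ x ∈ C, ∀ y ∈ C.erase x, 0 ≤ fF ((inner ℝ x y : ℝ)) := by
    intro x hx y hy
    obtain ⟨hyx, hyC⟩ := Finset.mem_erase.mp hy
    exact fF_nonneg _ (hlow x hx y hyC) (hCavoid x hx y hyC (Ne.symm hyx))
  have hge : (52416000:ℝ) ≤ (C.card : ℝ) := by
    have h1 := hsplit x₀ hx₀
    have h2 := Finset.sum_nonneg (hnonneg x₀ hx₀)
    rw [h1] at h2
    linarith
  refine ⟨by exact_mod_cast hge, ?_⟩
  intro hcard
  have hNval : ((C.card : ℕ) : ℝ) = 52416000 := by rw [hcard]; norm_num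
  have hzero : ∀ x ∈ C, ∀ y ∈ C.erase x, fF ((inner ℝ x y : ℝ)) = 0 := by
    intro x hx
    have h1 := hsplit x hx
    rw [hNval] at h1
    norm_num at h1
    exact fun y hy => (Finset.sum_eq_zero_iff_of_nonneg (hnonneg x hx)).mp h1 y hy
  have hroot : ∀ x ∈ C, ∀ y ∈ C, y ≠ x → IsRoot ((inner ℝ x y : ℝ)) := by
    intro x hx y hy hyx
    exact fF_root _ (hzero x hx y (Finset.mem_erase.mpr ⟨hyx, hy⟩))
  have hcount : ∀ x ∈ C, ∀ (L : ℝ → ℝ) (s Ms : ℝ), s ≠ 1 → L s = 1 →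
      (∀ u : ℝ, IsRoot u → u ≠ s → L u = 0) →
      (∑ y ∈ C, L ((inner ℝ x y : ℝ)) = (C.card : ℝ) * Ms) →
      ((C.filter fun y => (inner ℝ x y : ℝ) = s).card : ℝ) = (C.card : ℝ) * Ms - L 1 := by
    intro x hx L s Ms hs1 hLs hLz hsum
    have h := count_core hx (hdiag x hx) (fun y hy hyx => hroot x hx y hy hyx) L s hs1 hLs hLz
    rw [hsum] at h
    linarith
  have hcounts : ∀ x ∈ C,
      ((C.filter fun y => (inner ℝ x y : ℝ) = -1).card = 1) ∧
      ((C.filter fun y => (inner ℝ x y : ℝ) = -1/2).card = 36848) ∧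
      ((C.filter fun y => (inner ℝ x y : ℝ) = 1/2).card = 36848) ∧
      ((C.filter fun y => (inner ℝ x y : ℝ) = -1/3).card = 1678887) ∧
      ((C.filter fun y => (inner ℝ x y : ℝ) = 1/3).card = 1678887) ∧
      ((C.filter fun y => (inner ℝ x y : ℝ) = -1/6).card = 12608784) ∧
      ((C.filter fun y => (inner ℝ x y : ℝ) = 1/6).card = 12608784) ∧
      ((C.filter fun y => (inner ℝ x y : ℝ) = 0).card = 23766960) := by
    intro x hx
    have c_m1 : ((C.filter fun y => (inner ℝ x y : ℝ) = -1).card : ℝ) = 1 := by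
      have h := hcount x hx Lagm1 (-1) (0) (by norm_num) Lagm1_vals.1 Lagm1_vals.2
        (sum_Lagm1 hCsphere hCdesign x hx)
      rw [hNval] at h
      rw [h]; norm_num [Lagm1]
    have c_mh : ((C.filter fun y => (inner ℝ x y : ℝ) = -1/2).card : ℝ) = 36848 := by
      have h := hcount x hx Lagmh (-1/2) (11/15600) (by norm_num) Lagmh_vals.1 Lagmh_vals.2
        (sum_Lagmh hCsphere hCdesign x hx)
      rw [hNval] at h
      rw [h]; norm_num [Lagmh]
    have c_ph : ((C.filter fun y => (inner ℝ x y : ℝ) = 1/2).card : ℝ) = 36848 := by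
      have h := hcount x hx Lagph (1/2) (11/15600) (by norm_num) Lagph_vals.1 Lagph_vals.2
        (sum_Lagph hCsphere hCdesign x hx)
      rw [hNval] at h
      rw [h]; norm_num [Lagph]
    have c_mt : ((C.filter fun y => (inner ℝ x y : ℝ) = -1/3).card : ℝ) = 1678887 := by
      have h := hcount x hx Lagmt (-1/3) (333/10400) (by norm_num) Lagmt_vals.1 Lagmt_vals.2
        (sum_Lagmt hCsphere hCdesign x hx)
      rw [hNval] at h
      rw [h]; norm_num [Lagmt]
    have c_pt : ((C.filter fun y => (inner ℝ x y : ℝ) = 1/3).card : ℝ) = 1678887 := by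
      have h := hcount x hx Lagpt (1/3) (333/10400) (by norm_num) Lagpt_vals.1 Lagpt_vals.2
        (sum_Lagpt hCsphere hCdesign x hx)
      rw [hNval] at h
      rw [h]; norm_num [Lagpt]
    have c_ms : ((C.filter fun y => (inner ℝ x y : ℝ) = -1/6).card : ℝ) = 12608784 := by
      have h := hcount x hx Lagms (-1/6) (1251/5200) (by norm_num) Lagms_vals.1 Lagms_vals.2
        (sum_Lagms hCsphere hCdesign x hx)
      rw [hNval] at h
      rw [h]; norm_num [Lagms]
    have c_ps : ((C.filter fun y => (inner ℝ x y : ℝ) = 1/6).card : ℝ) = 12608784 := by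
      have h := hcount x hx Lagps (1/6) (1251/5200) (by norm_num) Lagps_vals.1 Lagps_vals.2
        (sum_Lagps hCsphere hCdesign x hx)
      rw [hNval] at h
      rw [h]; norm_num [Lagps]
    have c_ze : ((C.filter fun y => (inner ℝ x y : ℝ) = 0).card : ℝ) = 23766960 := by
      have h := hcount x hx Lagze (0) (7073/15600) (by norm_num) Lagze_vals.1 Lagze_vals.2
        (sum_Lagze hCsphere hCdesign x hx)
      rw [hNval] at h
      rw [h]; norm_num [Lagze]
    exact ⟨by exact_mod_cast c_m1, by exact_mod_cast c_mh, by exact_mod_cast c_ph,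
      by exact_mod_cast c_mt, by exact_mod_cast c_pt, by exact_mod_cast c_ms,
      by exact_mod_cast c_ps, by exact_mod_cast c_ze⟩
  refine ⟨?_, ?_, ?_⟩
  · intro x hx y hy hxy
    rcases hroot x hx y hy (Ne.symm hxy) with h|h|h|h|h|h|h|h <;> rw [h] <;> norm_num
  · intro x hx
    have h1 := (hcounts x hx).1
    obtain ⟨y, hy⟩ := Finset.card_pos.mp (by rw [h1]; norm_num)
    obtain ⟨hyC, hyin⟩ := Finset.mem_filter.mp hy
    have hyn := inner_eq_neg_one_imp (hCsphere x hx) (hCsphere y hyC) hyin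
    rwa [hyn] at hyC
  · intro x hx
    obtain ⟨h1, h2, h3, h4, h5, h6, h7, h8⟩ := hcounts x hx
    refine ⟨h1, h2, h3, h4, h5, h6, h7, h8, ?_⟩
    intro t ht hts
    rw [Finset.card_eq_zero, Finset.filter_eq_empty_iff]
    intro y hy hinner
    by_cases hyx : y = x
    · rw [hyx, hdiag x hx] at hinner
      exact absurd hinner.symm (ne_of_lt ht)
    · have hr := hroot x hx y hy hyx
      rw [hinner] at hr
      apply hts
      rcases hr with h|h|h|h|h|h|h|h <;> rw [h] <;> simp
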